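/- Let U and V be two bounded solutions of a first-order linear ODE system on (0,∞) taking values in ℂ², with sup norms M_U, M_V < ∞, and suppose the Wronskian W[U,V](x) = U(x)ᵗ J V(x), with J = [[0, i],[-i, 0]], is a nonzero constant W. Then for all x > 0, (∫₀ˣ ‖U(t)‖² dt) / (∫₀ˣ ‖V(t)‖² dt) ≥ |W|² / M_V⁴ > 0; in particular U is not subordinate to V, i.e. the ratio of integrals does not tend to 0 as x → ∞. -/

import Mathlib

open MeasureTheory Filter

lemma cs_aux (a b c d : ℝ) (ha : 0 ≤ a) (hb : 0 ≤ b) (hc : 0 ≤ c) (hd : 0 ≤ d) :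
    a * b + c * d ≤ Real.sqrt (a ^ 2 + c ^ 2) * Real.sqrt (d ^ 2 + b ^ 2) := by
  rw [← Real.sqrt_mul (by positivity)]
  rw [show a*b+c*d = |a*b+c*d| from (abs_of_nonneg (by positivity)).symm]
  rw [← Real.sqrt_sq_eq_abs]
  apply Real.sqrt_le_sqrt
  nlinarith [sq_nonneg (a*d - c*b)]

lemma key (u v : EuclideanSpace ℂ (Fin 2)) :
    ‖u 0 * (Complex.I * v 1) + u 1 * (-Complex.I * v 0)‖ ≤ ‖u‖ * ‖v‖ := by
  have hu : ‖u‖ = Real.sqrt (‖u 0‖ ^ 2 + ‖u 1‖ ^ 2) := by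
    simp [EuclideanSpace.norm_eq, Fin.sum_univ_two]
  have hv : ‖v‖ = Real.sqrt (‖v 0‖ ^ 2 + ‖v 1‖ ^ 2) := by
    simp [EuclideanSpace.norm_eq, Fin.sum_univ_two]
  calc ‖u 0 * (Complex.I * v 1) + u 1 * (-Complex.I * v 0)‖
      ≤ ‖u 0 * (Complex.I * v 1)‖ + ‖u 1 * (-Complex.I * v 0)‖ := norm_add_le _ _
    _ = ‖u 0‖ * ‖v 1‖ + ‖u 1‖ * ‖v 0‖ := by simp [norm_mul, Complex.norm_I]
    _ ≤ ‖u‖ * ‖v‖ := by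
        rw [hu, hv]
        exact cs_aux _ _ _ _ (norm_nonneg _) (norm_nonneg _) (norm_nonneg _) (norm_nonneg _)

/-- Two bounded solutions with constant nonzero Wronskian; lower bound on
the ratio of L² norms and absence of subordinacy. -/
theorem stmt0 (U V : ℝ → EuclideanSpace ℂ (Fin 2)) (M_U M_V : ℝ) (W : ℂ)
    (hUc : Continuous U) (hVc : Continuous V)
    (hMU : ∀ x, ‖U x‖ ≤ M_U) (hMV : ∀ x, ‖V x‖ ≤ M_V)
    (hW : ∀ x, U x 0 * (Complex.I * V x 1) + U x 1 * (-Complex.I * V x 0) = W)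
    (hW0 : W ≠ 0) :
    (∀ x > 0, ‖W‖ ^ 2 / M_V ^ 4 ≤
        (∫ t in Set.Ioc (0:ℝ) x, ‖U t‖ ^ 2) / (∫ t in Set.Ioc (0:ℝ) x, ‖V t‖ ^ 2)) ∧
    0 < ‖W‖ ^ 2 / M_V ^ 4 ∧
    ¬ Tendsto (fun x => (∫ t in Set.Ioc (0:ℝ) x, ‖U t‖ ^ 2) /
        (∫ t in Set.Ioc (0:ℝ) x, ‖V t‖ ^ 2)) atTop (nhds 0) := by
  have hWn : 0 < ‖W‖ := norm_pos_iff.mpr hW0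
  have hkey : ∀ t, ‖W‖ ≤ ‖U t‖ * ‖V t‖ := fun t => hW t ▸ key (U t) (V t)
  have hMVpos : 0 < M_V := by
    nlinarith [hkey 1, hMV 1, norm_nonneg (U 1), norm_nonneg (V 1)]
  have hMUpos : 0 < M_U := by
    nlinarith [hkey 1, hMU 1, norm_nonneg (U 1), norm_nonneg (V 1)]
  -- pointwise lower bounds
  have hUlb : ∀ t, ‖W‖ / M_V ≤ ‖U t‖ := by
    intro t
    rw [div_le_iff₀ hMVpos]
    calc ‖W‖ ≤ ‖U t‖ * ‖V t‖ := hkey t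
      _ ≤ ‖U t‖ * M_V := by
          exact mul_le_mul_of_nonneg_left (hMV t) (norm_nonneg _)
  have hc : 0 < ‖W‖ ^ 2 / M_V ^ 4 := by positivity
  have hmain : ∀ x > (0:ℝ), ‖W‖ ^ 2 / M_V ^ 4 ≤
      (∫ t in Set.Ioc (0:ℝ) x, ‖U t‖ ^ 2) / (∫ t in Set.Ioc (0:ℝ) x, ‖V t‖ ^ 2) := by
    intro x hx
    have hIntU : IntegrableOn (fun t => ‖U t‖ ^ 2) (Set.Ioc 0 x) :=
      ((hUc.norm.pow 2)).integrableOn_Ioc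
    have hIntV : IntegrableOn (fun t => ‖V t‖ ^ 2) (Set.Ioc 0 x) :=
      ((hVc.norm.pow 2)).integrableOn_Ioc
    have hIntc : IntegrableOn (fun _ : ℝ => ‖W‖ ^ 2 / M_V ^ 2) (Set.Ioc 0 x) :=
      (integrableOn_const_iff).mpr (Or.inr measure_Ioc_lt_top)
    have hIntc2 : IntegrableOn (fun _ : ℝ => M_V ^ 2) (Set.Ioc 0 x) :=
      (integrableOn_const_iff).mpr (Or.inr measure_Ioc_lt_top)
    have hIU : x * (‖W‖ ^ 2 / M_V ^ 2) ≤ ∫ t in Set.Ioc (0:ℝ) x, ‖U t‖ ^ 2 := by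
      have := setIntegral_mono_on hIntc hIntU measurableSet_Ioc (fun t _ => by
        have h1 := hUlb t
        have h2 : 0 ≤ ‖W‖ / M_V := by positivity
        have : (‖W‖ / M_V) ^ 2 ≤ ‖U t‖ ^ 2 := by nlinarith [norm_nonneg (U t)]
        calc ‖W‖ ^ 2 / M_V ^ 2 = (‖W‖ / M_V) ^ 2 := by ring
          _ ≤ ‖U t‖ ^ 2 := this)
      simpa [Real.volume_Ioc, ENNReal.toReal_ofReal hx.le, smul_eq_mul, max_eq_left hx.le] using this
    have hIV : (∫ t in Set.Ioc (0:ℝ) x, ‖V t‖ ^ 2) ≤ x * M_V ^ 2 := by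
      have := setIntegral_mono_on hIntV hIntc2 measurableSet_Ioc (fun t _ => by
        have := hMV t
        nlinarith [norm_nonneg (V t)])
      simpa [Real.volume_Ioc, ENNReal.toReal_ofReal hx.le, smul_eq_mul, max_eq_left hx.le] using this
    have hIVpos : 0 < ∫ t in Set.Ioc (0:ℝ) x, ‖V t‖ ^ 2 := by
      have hVlb : ∀ t, ‖W‖ / M_U ≤ ‖V t‖ := by
        intro t
        rw [div_le_iff₀ hMUpos]
        calc ‖W‖ ≤ ‖U t‖ * ‖V t‖ := hkey t
          _ ≤ M_U * ‖V t‖ := mul_le_mul_of_nonneg_right (hMU t) (norm_nonneg _)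
          _ = ‖V t‖ * M_U := mul_comm _ _
      have hIntc3 : IntegrableOn (fun _ : ℝ => (‖W‖ / M_U) ^ 2) (Set.Ioc 0 x) :=
        (integrableOn_const_iff).mpr (Or.inr measure_Ioc_lt_top)
      have := setIntegral_mono_on hIntc3 hIntV measurableSet_Ioc (fun t _ => by
        have h1 := hVlb t
        have h2 : 0 ≤ ‖W‖ / M_U := by positivity
        nlinarith [norm_nonneg (V t)])
      have hpos : 0 < x * (‖W‖ / M_U) ^ 2 := by positivity
      calc (0:ℝ) < x * (‖W‖ / M_U) ^ 2 := hpos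
        _ ≤ _ := by
          simpa [Real.volume_Ioc, ENNReal.toReal_ofReal hx.le, smul_eq_mul, max_eq_left hx.le] using this
    rw [div_le_div_iff₀ (by positivity) hIVpos]
    have hWsq : 0 ≤ ‖W‖ ^ 2 := by positivity
    have hIU' : x * ‖W‖ ^ 2 ≤ (∫ t in Set.Ioc (0:ℝ) x, ‖U t‖ ^ 2) * M_V ^ 2 := by
      have h := mul_le_mul_of_nonneg_right hIU (sq_nonneg M_V)
      calc x * ‖W‖ ^ 2 = x * (‖W‖ ^ 2 / M_V ^ 2) * M_V ^ 2 := by field_simp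
        _ ≤ _ := h
    nlinarith [mul_le_mul_of_nonneg_left hIV hWsq,
      mul_le_mul_of_nonneg_left hIU' (sq_nonneg M_V)]
  refine ⟨hmain, hc, ?_⟩
  intro h
  have h1 := (tendsto_order.mp h).2 _ hc
  have h2 : ∀ᶠ x in atTop, (0:ℝ) < x := eventually_gt_atTop 0
  obtain ⟨x, hx1, hx2⟩ := (h1.and h2).exists
  exact absurd (hmain x hx2) (not_le.mpr hx1)
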